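/- Let p > 1 be real and define f_p(z) = 1 - (1-z)(1 - z/p)^{-p} (principal branch), analytic on D(0,p). Then for every z in the closed unit disk with z ∉ {0,1}, |f_p(z)| < |z|^2. -/

import Mathlib

open Complex Filter Function Finset

namespace Stmt7Aux

variable {p : ℝ}

lemma slit (hp : 1 < p) {z : ℂ} (hz : ‖z‖ < p) : 1 - z / (p : ℂ) ∈ Complex.slitPlane := by
  rw [Complex.mem_slitPlane_iff]
  left
  have hp0 : (0:ℝ) < p := lt_trans one_pos hp
  have h1 : (1 - z / (p:ℂ)).re = 1 - z.re / p := by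
    simp [Complex.sub_re, Complex.div_ofReal_re]
  rw [h1]
  have hre : z.re ≤ ‖z‖ := by
    have := Complex.re_le_norm z
    exact this
  have : z.re / p < 1 := (div_lt_one hp0).mpr (lt_of_le_of_lt hre hz)
  linarith

lemma hasDeriv (hp : 1 < p) (c : ℂ) {z : ℂ} (hz : ‖z‖ < p) :
    HasDerivAt (fun w : ℂ => (1 - w / (p:ℂ)) ^ c)
      (c * (1 - z / (p:ℂ)) ^ (c - 1) * (-(1 / (p:ℂ)))) z := by
  have h1 : HasDerivAt (fun w : ℂ => 1 - w / (p:ℂ)) (-(1 / (p:ℂ))) z := by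
    simpa using ((hasDerivAt_id z).div_const (p:ℂ)).const_sub 1
  exact h1.cpow_const (slit hp hz)

noncomputable def Cc (p : ℝ) (n : ℕ) : ℂ := ∏ k ∈ range n, (((p:ℂ) + k) / p)

lemma iter (hp : 1 < p) (n : ℕ) : ∀ {z : ℂ}, ‖z‖ < p →
    iteratedDeriv n (fun w : ℂ => (1 - w / (p:ℂ)) ^ (-(p:ℂ))) z
      = Cc p n * (1 - z / (p:ℂ)) ^ (-(p:ℂ) - n) := by
  have hp0 : (p:ℂ) ≠ 0 := by
    have : (0:ℝ) < p := lt_trans one_pos hp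
    exact_mod_cast ne_of_gt this
  induction n with
  | zero => intro z hz; simp [Cc]
  | succ n ih =>
    intro z hz
    have hopen : IsOpen {w : ℂ | ‖w‖ < p} := by
      have h : {w : ℂ | ‖w‖ < p} = Metric.ball 0 p := by
        ext w; simp [Metric.mem_ball, dist_zero_right]
      rw [h]; exact Metric.isOpen_ball
    have hev : iteratedDeriv n (fun w : ℂ => (1 - w / (p:ℂ)) ^ (-(p:ℂ)))
        =ᶠ[nhds z] fun w => Cc p n * (1 - w / (p:ℂ)) ^ (-(p:ℂ) - n) :=
      eventually_of_mem (hopen.mem_nhds hz) (fun w hw => ih hw)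
    rw [iteratedDeriv_succ, hev.deriv_eq,
      ((hasDeriv hp (-(p:ℂ) - n) hz).const_mul (Cc p n)).deriv]
    have hexp : -(p:ℂ) - ((n+1 : ℕ) : ℂ) = -(p:ℂ) - n - 1 := by push_cast; ring
    rw [show (Cc p (n+1)) = Cc p n * (((p:ℂ) + n) / p) from prod_range_succ _ n, hexp]
    field_simp
    ring

lemma iterFDeriv_apply (n : ℕ) (f : ℂ → ℂ) (x z : ℂ) :
    iteratedFDeriv ℂ n f x (fun _ => z) = z ^ n • iteratedDeriv n f x := by
  have h1 : (fun _ : Fin n => z) = fun i : Fin n => z • (fun _ : Fin n => (1:ℂ)) i := by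
    funext i; simp
  rw [h1, ContinuousMultilinearMap.map_smul_univ, ← iteratedDeriv_eq_iteratedFDeriv]
  simp [Finset.prod_const]

lemma hasSum_Cc (hp : 1 < p) {z : ℂ} (hz : ‖z‖ ≤ 1) :
    HasSum (fun n : ℕ => ((n.factorial : ℂ))⁻¹ * Cc p n * z ^ n)
      ((1 - z / (p:ℂ)) ^ (-(p:ℂ))) := by
  have hp0 : (0:ℝ) < p := lt_trans one_pos hp
  set R : NNReal := ⟨(1 + p)/2, by positivity⟩ with hR
  have hRcoe : (R : ℝ) = (1 + p)/2 := rfl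
  have hRlt : ((1 + p)/2 : ℝ) < p := by linarith
  have h1R : (1:ℝ) < (1 + p)/2 := by linarith
  have hdiff : DifferentiableOn ℂ (fun w : ℂ => (1 - w / (p:ℂ)) ^ (-(p:ℂ)))
      (Metric.closedBall 0 (R:ℝ)) := by
    intro w hw
    have hwp : ‖w‖ < p := by
      have h := Metric.mem_closedBall.mp hw
      rw [dist_zero_right, hRcoe] at h
      linarith
    exact (hasDeriv hp (-(p:ℂ)) hwp).differentiableAt.differentiableWithinAt
  have hball := hdiff.hasFPowerSeriesOnBall (by
    rw [← NNReal.coe_pos, hRcoe]; positivity)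
  have hmem : z ∈ Metric.eball (0:ℂ) (R : ENNReal) := by
    rw [mem_emetric_ball_zero_iff, enorm_eq_nnnorm, ENNReal.coe_lt_coe, ← NNReal.coe_lt_coe]
    calc (‖z‖₊ : ℝ) = ‖z‖ := rfl
    _ ≤ 1 := hz
    _ < (R : ℝ) := by rw [hRcoe]; exact h1R
  have H := hball.hasSum_iteratedFDeriv hmem
  rw [zero_add] at H
  have hterm : ∀ n : ℕ, ((n.factorial : ℂ))⁻¹ •
      iteratedFDeriv ℂ n (fun w : ℂ => (1 - w/(p:ℂ)) ^ (-(p:ℂ))) 0 (fun _ => z)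
      = (n.factorial : ℂ)⁻¹ * Cc p n * z ^ n := by
    intro n
    rw [iterFDeriv_apply, iter hp n (by simpa using hp0)]
    have h0 : (1 : ℂ) - 0 / (p:ℂ) = 1 := by simp
    rw [h0, Complex.one_cpow]
    simp only [smul_eq_mul, mul_one]
    ring
  simp only [hterm] at H
  exact H

noncomputable def Ar (p : ℝ) (n : ℕ) : ℝ := ∏ k ∈ range n, ((p + k) / ((k+1) * p))

lemma Ar_cast (hp : 1 < p) (n : ℕ) : ((Ar p n : ℝ) : ℂ) = ((n.factorial : ℂ))⁻¹ * Cc p n := by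
  have hp0 : (p:ℂ) ≠ 0 := by
    have : (0:ℝ) < p := lt_trans one_pos hp
    exact_mod_cast ne_of_gt this
  rw [Ar, Cc, ← Finset.prod_range_add_one_eq_factorial]
  push_cast
  rw [← Finset.prod_inv_distrib, ← Finset.prod_mul_distrib]
  apply Finset.prod_congr rfl
  intro k _
  have hk1 : ((k:ℂ) + 1) ≠ 0 := by exact_mod_cast Nat.succ_ne_zero k
  field_simp

lemma Ar_pos (hp : 1 < p) (n : ℕ) : 0 < Ar p n := by
  have hp0 : (0:ℝ) < p := lt_trans one_pos hp
  refine Finset.prod_pos fun k _ => div_pos (by positivity) (by positivity)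

lemma Ar_zero : Ar p 0 = 1 := by simp [Ar]

lemma Ar_succ (n : ℕ) : Ar p (n+1) = Ar p n * ((p + n) / ((n+1) * p)) :=
  prod_range_succ _ n

noncomputable def Br (p : ℝ) (n : ℕ) : ℝ := Ar p n - Ar p (n+1)

lemma Br_zero (hp : 1 < p) : Br p 0 = 0 := by
  have hp0 : p ≠ 0 := ne_of_gt (lt_trans one_pos hp)
  rw [Br, Ar_succ, Ar_zero]
  push_cast
  field_simp
  ring

lemma Br_pos (hp : 1 < p) (n : ℕ) (hn : 1 ≤ n) : 0 < Br p n := by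
  have hp0 : (0:ℝ) < p := lt_trans one_pos hp
  have hA := Ar_pos hp n
  rw [Br, Ar_succ]
  have hden : (0:ℝ) < (n+1) * p := by positivity
  have hratio : (p + n) / ((n+1) * p) < 1 := by
    rw [div_lt_one hden]
    have hn' : (1:ℝ) ≤ n := by exact_mod_cast hn
    nlinarith
  nlinarith

lemma Br_nonneg (hp : 1 < p) (n : ℕ) : 0 ≤ Br p n := by
  cases n with
  | zero => rw [Br_zero hp]
  | succ n => exact le_of_lt (Br_pos hp (n+1) (Nat.le_add_left 1 n))

lemma hasSum_Br (hp : 1 < p) {z : ℂ} (hz : ‖z‖ ≤ 1) :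
    HasSum (fun n : ℕ => ((Br p n : ℝ) : ℂ) * z ^ (n+1))
      (1 - (1 - z) * (1 - z / (p:ℂ)) ^ (-(p:ℂ))) := by
  have hA : HasSum (fun n : ℕ => ((Ar p n : ℝ):ℂ) * z ^ n) ((1 - z/(p:ℂ)) ^ (-(p:ℂ))) := by
    have h := hasSum_Cc hp hz
    simp only [← Ar_cast hp] at h
    exact h
  set F := (1 - z/(p:ℂ)) ^ (-(p:ℂ)) with hF
  have h1 : HasSum (fun n : ℕ => ((Ar p n : ℝ):ℂ) * z ^ (n+1)) (z * F) := by
    have h := hA.mul_left z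
    simp only [show ∀ n : ℕ, z * (((Ar p n : ℝ):ℂ) * z ^ n) = ((Ar p n : ℝ):ℂ) * z ^ (n+1)
      from fun n => by ring] at h
    exact h
  have h2 : HasSum (fun n : ℕ => ((Ar p (n+1) : ℝ):ℂ) * z ^ (n+1)) (F - 1) := by
    refine (hasSum_nat_add_iff (f := fun n : ℕ => ((Ar p n : ℝ):ℂ) * z ^ n) 1).mpr ?_
    simpa [Ar_zero] using hA
  have h3 := h1.sub h2
  have hterm : ∀ n : ℕ, ((Ar p n : ℝ):ℂ) * z ^ (n+1) - ((Ar p (n+1) : ℝ):ℂ) * z ^ (n+1)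
      = ((Br p n : ℝ):ℂ) * z ^ (n+1) := by
    intro n; rw [Br]; push_cast; ring
  simp only [hterm] at h3
  have hval : z * F - (F - 1) = 1 - (1 - z) * F := by ring
  rwa [hval] at h3

lemma hasSum_Br_one (hp : 1 < p) : HasSum (Br p) 1 := by
  have h := hasSum_Br hp (z := 1) (by simp)
  simp only [one_pow, mul_one, sub_self, zero_mul, sub_zero] at h
  have h2 := Complex.reCLM.hasSum h
  simpa using h2

end Stmt7Aux

open Stmt7Aux in
theorem stmt_7 (p : ℝ) (hp : 1 < p) :
    ∀ z : ℂ, ‖z‖ ≤ 1 → z ≠ 0 → z ≠ 1 →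
      ‖1 - (1 - z) * (1 - z / p) ^ (-(p : ℂ))‖ < ‖z‖ ^ 2 := by
  intro z hz1 hz0 hzne
  have hS := hasSum_Br hp hz1
  have hB1 : HasSum (Br p) 1 := hasSum_Br_one hp
  set g : ℕ → ℂ := fun n => ((Br p n : ℝ):ℂ) * z ^ (n+1) with hg
  set f : ℂ := 1 - (1 - z) * (1 - z / (p:ℂ)) ^ (-(p:ℂ)) with hf
  have hnorm : ∀ n, ‖g n‖ = Br p n * ‖z‖ ^ (n+1) := by
    intro n
    rw [hg]
    simp only [norm_mul, norm_pow, Complex.norm_real]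
    rw [Real.norm_eq_abs, _root_.abs_of_nonneg (Br_nonneg hp n)]
  rcases lt_or_eq_of_le hz1 with hlt | heq
  · -- interior case
    have hzpos : (0:ℝ) < ‖z‖ := norm_pos_iff.mpr hz0
    have hsum_norm : Summable (fun n => Br p n * ‖z‖ ^ (n+1)) := by
      refine Summable.of_nonneg_of_le (fun n => mul_nonneg (Br_nonneg hp n) (by positivity)) (fun n => ?_) hB1.summable
      have h1 : ‖z‖ ^ (n+1) ≤ 1 := pow_le_one₀ (norm_nonneg z) hz1
      calc Br p n * ‖z‖ ^ (n+1) ≤ Br p n * 1 :=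
        mul_le_mul_of_nonneg_left h1 (Br_nonneg hp n)
      _ = Br p n := mul_one _
    have hle : ‖f‖ ≤ ∑' n, Br p n * ‖z‖ ^ (n+1) := by
      rw [← hS.tsum_eq]
      refine le_trans (norm_tsum_le_tsum_norm
        (hsum_norm.congr fun n => (hnorm n).symm)) (le_of_eq (tsum_congr hnorm))
    have h2 : ∑' n, Br p n * ‖z‖ ^ (n+1) < ∑' n, Br p n * ‖z‖ ^ 2 := by
      refine Summable.tsum_lt_tsum_of_nonneg (i := 2) (fun n => mul_nonneg (Br_nonneg hp n) (by positivity)) (fun n => ?_) ?_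
        (hB1.summable.mul_right _)
      · cases n with
        | zero => rw [Br_zero hp]; simp
        | succ m =>
          refine mul_le_mul_of_nonneg_left ?_ (Br_nonneg hp (m+1))
          exact pow_le_pow_of_le_one (norm_nonneg z) (le_of_lt hlt) (by omega)
      · refine mul_lt_mul_of_pos_left ?_ (Br_pos hp 2 one_le_two)
        exact pow_lt_pow_right_of_lt_one₀ hzpos hlt (by norm_num)
    have h3 : ∑' n, Br p n * ‖z‖ ^ 2 = ‖z‖ ^ 2 := by
      rw [tsum_mul_right, hB1.tsum_eq, one_mul]
    linarith
  · -- boundary case, ‖z‖ = 1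
    have heq' : ‖z‖ = 1 := heq
    have hnsq : Complex.normSq z = 1 := by
      rw [← Complex.sq_norm, heq']
      norm_num
    have hre_le : z.re ≤ 1 := by
      have h := Complex.re_le_norm z
      rwa [heq'] at h
    have hre_lt : z.re < 1 := by
      rcases eq_or_lt_of_le hre_le with h | h
      · exfalso
        apply hzne
        have him : z.im = 0 := by
          have h2 := Complex.normSq_apply z
          nlinarith
        apply Complex.ext
        · simpa using h
        · simpa using him
      · exact h
    have hB1pos := Br_pos hp 1 le_rfl
    have hB2pos := Br_pos hp 2 one_le_two
    -- strict triangle for g 1 + g 2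
    have hzc : z * (starRingEnd ℂ) z = 1 := by
      rw [Complex.mul_conj, hnsq, Complex.ofReal_one]
    have h12 : ‖g 1 + g 2‖ < Br p 1 + Br p 2 := by
      have key : ‖g 1 + g 2‖ ^ 2 < (Br p 1 + Br p 2) ^ 2 := by
        have h1 : ‖g 1 + g 2‖ ^ 2 = Complex.normSq (g 1 + g 2) := by
          rw [Complex.sq_norm]
        rw [h1, Complex.normSq_add]
        have e1 : Complex.normSq (g 1) = (Br p 1) ^ 2 := by
          simp [hg, Complex.normSq_mul, map_pow, Complex.normSq_ofReal, hnsq]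
          ring
        have e2 : Complex.normSq (g 2) = (Br p 2) ^ 2 := by
          simp [hg, Complex.normSq_mul, map_pow, Complex.normSq_ofReal, hnsq]
          ring
        have e3 : (g 1 * (starRingEnd ℂ) (g 2)).re = Br p 1 * Br p 2 * z.re := by
          have hc : g 1 * (starRingEnd ℂ) (g 2)
              = ((Br p 1 : ℝ):ℂ) * ((Br p 2 : ℝ):ℂ) * ((z * (starRingEnd ℂ) z) ^ 2 * (starRingEnd ℂ) z) := by
            simp only [hg, map_mul, map_pow, Complex.conj_ofReal]
            ring
          rw [hc, hzc]
          simp [Complex.mul_re, Complex.ofReal_re, Complex.ofReal_im, Complex.conj_re,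
            Complex.conj_im]
        rw [e1, e2, e3]
        nlinarith [mul_pos (mul_pos hB1pos hB2pos) (sub_pos.mpr hre_lt)]
      exact lt_of_pow_lt_pow_left₀ 2 (by positivity) key
    -- tail estimate
    have hupd := (hS.update 1 0).update 2 0
    have hval2 : (update g 1 0) 2 = g 2 := update_of_ne (by norm_num) _ _
    rw [hval2] at hupd
    have hupdB := (hB1.update 1 0).update 2 0
    rw [show (update (Br p) 1 0) 2 = Br p 2 from update_of_ne (by norm_num) _ _] at hupdB
    have hnormu : ∀ n, ‖(update (update g 1 0) 2 0) n‖ = (update (update (Br p) 1 0) 2 0) n := by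
      intro n
      rcases eq_or_ne n 2 with h | h
      · subst h; simp
      rcases eq_or_ne n 1 with h1 | h1
      · subst h1; simp
      · rw [update_of_ne h, update_of_ne h1, update_of_ne h, update_of_ne h1, hnorm n, heq']
        simp
    have htail : ‖0 - g 2 + (0 - g 1 + f)‖ ≤ 0 - Br p 2 + (0 - Br p 1 + 1) := by
      rw [← hupdB.tsum_eq, ← hupd.tsum_eq]
      refine le_trans (norm_tsum_le_tsum_norm
        (hupdB.summable.congr fun n => (hnormu n).symm)) (le_of_eq (tsum_congr hnormu))
    have hsplit : f = (g 1 + g 2) + (0 - g 2 + (0 - g 1 + f)) := by ring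
    have hfinal : ‖f‖ < 1 := by
      calc ‖f‖ = ‖(g 1 + g 2) + (0 - g 2 + (0 - g 1 + f))‖ := by rw [← hsplit]
      _ ≤ ‖g 1 + g 2‖ + ‖0 - g 2 + (0 - g 1 + f)‖ := norm_add_le _ _
      _ < (Br p 1 + Br p 2) + (0 - Br p 2 + (0 - Br p 1 + 1)) := by
          have := htail; linarith
      _ = 1 := by ring
    rw [heq']
    simpa using hfinal
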